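/- For β ≥ 0.94, t ∈ [0, 0.1], and b ∈ [0.14, 0.19], one has β²·π·(1 + ρ(t)) ≥ 0.681, where ρ(t) = (-(1-b)² + t²)/√((1 - (b²+t²))² - 4b²t²). -/

import Mathlib

noncomputable def rhoT (b t : ℝ) : ℝ :=
  (-(1 - b) ^ 2 + t ^ 2) / Real.sqrt ((1 - (b ^ 2 + t ^ 2)) ^ 2 - 4 * b ^ 2 * t ^ 2)

set_option maxHeartbeats 1000000 in
theorem stmt_9 (β b t : ℝ) (hβ : β ≥ 0.94) (hb : b ∈ Set.Icc (0.14 : ℝ) 0.19)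
    (ht : t ∈ Set.Icc (0 : ℝ) 0.1) :
    β ^ 2 * Real.pi * (1 + rhoT b t) ≥ 0.681 := by
  obtain ⟨hb1, hb2⟩ := hb
  obtain ⟨ht1, ht2⟩ := ht
  have hP : (0:ℝ) < (1-b)^2 - t^2 := by nlinarith
  have hQ : (0:ℝ) < (1+b)^2 - t^2 := by nlinarith
  set sP := Real.sqrt ((1-b)^2 - t^2) with hsP
  set sQ := Real.sqrt ((1+b)^2 - t^2) with hsQ
  have hsP2 : sP^2 = (1-b)^2 - t^2 := Real.sq_sqrt hP.le
  have hsQ2 : sQ^2 = (1+b)^2 - t^2 := Real.sq_sqrt hQ.le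
  have hsPpos : 0 < sP := Real.sqrt_pos.mpr hP
  have hsQpos : 0 < sQ := Real.sqrt_pos.mpr hQ
  have hfac : (1 - (b^2+t^2))^2 - 4*b^2*t^2 = ((1-b)^2 - t^2) * ((1+b)^2 - t^2) := by ring
  have hrho : rhoT b t = - (sP / sQ) := by
    rw [rhoT, hfac, Real.sqrt_mul hP.le, ← hsP, ← hsQ]
    have h1 : -(1-b)^2 + t^2 = -(sP * sP) := by
      rw [← pow_two, hsP2]; ring
    rw [h1]
    field_simp
  have hc : (0:ℝ) < (1-b) * sQ := mul_pos (by linarith) hsQpos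
  have hsqle : (sP*(1+b))^2 ≤ ((1-b)*sQ)^2 := by nlinarith [hsP2, hsQ2, sq_nonneg t]
  have key : sP * (1+b) ≤ (1-b) * sQ := by
    nlinarith [sq_nonneg (sP*(1+b) - (1-b)*sQ)]
  have h1b : (0:ℝ) < 1 + b := by linarith
  have hrat : sP / sQ ≤ (1-b)/(1+b) := by
    rw [div_le_div_iff₀ hsQpos h1b]
    linarith
  have hlow : 1 + rhoT b t ≥ 2*b/(1+b) := by
    rw [hrho]
    have : (1:ℝ) - (1-b)/(1+b) = 2*b/(1+b) := by field_simp; ring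
    linarith [this]
  have hlow2 : 1 + rhoT b t ≥ 0.2456 := by
    have : (0.2456:ℝ) ≤ 2*b/(1+b) := by
      rw [le_div_iff₀ h1b]; nlinarith
    linarith
  have hβ2 : (0.8836:ℝ) ≤ β^2 := by
    have : ((0.94:ℝ))^2 ≤ β^2 := pow_le_pow_left₀ (by norm_num) hβ 2
    nlinarith [this]
  have hA : (2.7759:ℝ) ≤ β^2 * Real.pi := by
    have h1 : (0.8836:ℝ) * 3.141592 ≤ β^2 * Real.pi :=
      mul_le_mul hβ2 Real.pi_gt_d6.le (by norm_num) (by positivity)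
    calc (2.7759:ℝ) ≤ 0.8836 * 3.141592 := by norm_num
      _ ≤ β^2 * Real.pi := h1
  have hfin : 2.7759 * 0.2456 ≤ β^2 * Real.pi * (1 + rhoT b t) :=
    mul_le_mul hA hlow2 (by norm_num) (by linarith)
  linarith [hfin]
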